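/- Let S be a symmetric n×n real matrix all of whose eigenvalues lie in the interval [0,1]. Then for every m ∈ ℝⁿ and every k ≥ 1: (a) ‖(I−S)^{k+1} m‖ ≤ ‖(I−S)^k m‖, i.e. each bias-correction iteration does not increase the squared bias; and (b) (I − (I−S)^{k+1})² − (I − (I−S)^k)² is positive semidefinite, i.e. each iteration does not decrease the variance matrix σ²(I − (I−S)^k)² in the Loewner order. -/

import Mathlib

open Matrix

section Aux
variable {n : ℕ} {U : Matrix (Fin n) (Fin n) ℝ}

lemma cnj_mul_conj (hU : star U * U = 1) (d e : Fin n → ℝ) :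
    (U * diagonal d * star U) * (U * diagonal e * star U)
      = U * diagonal (d * e) * star U := by
  simp only [Matrix.mul_assoc]
  rw [← Matrix.mul_assoc (star U) U, hU, Matrix.one_mul, ← Matrix.mul_assoc (diagonal d),
    diagonal_mul_diagonal]
  rfl

lemma cnj_one (hU' : U * star U = 1) :
    U * diagonal (fun _ => (1 : ℝ)) * star U = 1 := by
  have : diagonal (fun _ => (1:ℝ)) = (1 : Matrix (Fin n) (Fin n) ℝ) := diagonal_one
  rw [this, Matrix.mul_one, hU']

lemma cnj_sub (d e : Fin n → ℝ) :
    (U * diagonal d * star U) - (U * diagonal e * star U)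
      = U * diagonal (d - e) * star U := by
  have : diagonal (d - e) = diagonal d - diagonal e := by
    ext i j; by_cases h : i = j <;> simp [diagonal, h, Pi.sub_apply]
  rw [this, Matrix.mul_sub, Matrix.sub_mul]

lemma cnj_pow (hU : star U * U = 1) (hU' : U * star U = 1) (d : Fin n → ℝ) (k : ℕ) :
    (U * diagonal d * star U) ^ k = U * diagonal (d ^ k) * star U := by
  induction k with
  | zero =>
      simp only [pow_zero]
      rw [show (1 : Fin n → ℝ) = fun _ => (1:ℝ) from rfl, cnj_one hU']
  | succ k ih => rw [pow_succ, ih, cnj_mul_conj hU, ← pow_succ]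

lemma cnj_psd (hU : star U * U = 1) {d : Fin n → ℝ} (hd : ∀ i, 0 ≤ d i) :
    (U * diagonal d * star U).PosSemidef := by
  have : (diagonal d).PosSemidef := Matrix.PosSemidef.diagonal hd
  simpa [Matrix.mul_assoc, Matrix.star_eq_conjTranspose] using this.mul_mul_conjTranspose_same U

end Aux

/-- **Monotone bias decrease and variance increase for symmetric smoothers.**
If `S` is symmetric with all eigenvalues in `[0,1]`, then for every `m` and `k ≥ 1`:
(a) `‖(I−S)^{k+1} m‖ ≤ ‖(I−S)^k m‖` (the squared bias does not increase), and
(b) `(I − (I−S)^{k+1})² − (I − (I−S)^k)²` is positive semidefinite (the variance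
matrix does not decrease in the Loewner order). -/
theorem bias_decreases_variance_increases
    {n : ℕ} (S : Matrix (Fin n) (Fin n) ℝ) (hS : S.IsSymm)
    (hEig : ∀ (μ : ℝ) (v : Fin n → ℝ), v ≠ 0 → S.mulVec v = μ • v → μ ∈ Set.Icc (0 : ℝ) 1) :
    ∀ (m : Fin n → ℝ) (k : ℕ), 1 ≤ k →
      (‖(WithLp.equiv 2 (Fin n → ℝ)).symm
          ((((1 : Matrix (Fin n) (Fin n) ℝ) - S) ^ (k + 1)).mulVec m)‖ ≤
        ‖(WithLp.equiv 2 (Fin n → ℝ)).symm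
          ((((1 : Matrix (Fin n) (Fin n) ℝ) - S) ^ k).mulVec m)‖) ∧
      (((1 : Matrix (Fin n) (Fin n) ℝ) -
          ((1 : Matrix (Fin n) (Fin n) ℝ) - S) ^ (k + 1)) ^ 2 -
        ((1 : Matrix (Fin n) (Fin n) ℝ) -
          ((1 : Matrix (Fin n) (Fin n) ℝ) - S) ^ k) ^ 2).PosSemidef := by
  intro m k hk
  have hA : S.IsHermitian := hS
  set U : Matrix (Fin n) (Fin n) ℝ := (hA.eigenvectorUnitary : Matrix (Fin n) (Fin n) ℝ) with hUdef
  have hU : star U * U = 1 := Matrix.mem_unitaryGroup_iff'.mp hA.eigenvectorUnitary.2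
  have hU' : U * star U = 1 := Matrix.mem_unitaryGroup_iff.mp hA.eigenvectorUnitary.2
  set ev : Fin n → ℝ := hA.eigenvalues with hev
  have hev01 : ∀ i, ev i ∈ Set.Icc (0:ℝ) 1 := by
    intro i
    refine hEig (ev i) (hA.eigenvectorBasis i) ?_ (hA.mulVec_eigenvectorBasis i)
    simpa using hA.eigenvectorBasis.orthonormal.ne_zero i
  have hSdiag : S = U * diagonal ev * star U := by
    have := hA.spectral_theorem
    simpa using this
  set t : Fin n → ℝ := (fun _ => (1:ℝ)) - ev with ht
  have ht01 : ∀ i, t i ∈ Set.Icc (0:ℝ) 1 := by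
    intro i
    have := hev01 i
    constructor <;> simp [ht] <;> [exact this.2; exact this.1]
  have hT : (1 : Matrix (Fin n) (Fin n) ℝ) - S = U * diagonal t * star U := by
    conv_lhs => rw [hSdiag, show (1 : Matrix (Fin n) (Fin n) ℝ)
      = U * diagonal (fun _ => (1:ℝ)) * star U from (cnj_one hU').symm]
    rw [cnj_sub]
  have hTk : ∀ j : ℕ, ((1 : Matrix (Fin n) (Fin n) ℝ) - S) ^ j
      = U * diagonal (t ^ j) * star U := by
    intro j; rw [hT, cnj_pow hU hU']
  have hBj : ∀ j : ℕ, ((1 : Matrix (Fin n) (Fin n) ℝ)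
        - ((1 : Matrix (Fin n) (Fin n) ℝ) - S) ^ j) ^ 2
      = U * diagonal (((fun _ => (1:ℝ)) - t ^ j) ^ 2) * star U := by
    intro j
    rw [hTk j]
    conv_lhs => rw [show (1 : Matrix (Fin n) (Fin n) ℝ)
      = U * diagonal (fun _ => (1:ℝ)) * star U from (cnj_one hU').symm]
    rw [cnj_sub, cnj_pow hU hU']
  constructor
  · -- part (a)
    have key : ∀ j : ℕ, (((1 : Matrix (Fin n) (Fin n) ℝ) - S) ^ j *ᵥ m) ⬝ᵥ
        (((1 : Matrix (Fin n) (Fin n) ℝ) - S) ^ j *ᵥ m)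
        = m ⬝ᵥ (((1 : Matrix (Fin n) (Fin n) ℝ) - S) ^ (j + j) *ᵥ m) := by
      intro j
      have hsymm : (((1 : Matrix (Fin n) (Fin n) ℝ) - S) ^ j)ᵀ
          = ((1 : Matrix (Fin n) (Fin n) ℝ) - S) ^ j := by
        rw [transpose_pow, transpose_sub, transpose_one, hS]
      rw [dotProduct_mulVec, ← mulVec_transpose, hsymm, mulVec_mulVec, ← pow_add,
        dotProduct_comm]
    have hD : (((1 : Matrix (Fin n) (Fin n) ℝ) - S) ^ (k + k)
        - ((1 : Matrix (Fin n) (Fin n) ℝ) - S) ^ ((k+1) + (k+1))).PosSemidef := by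
      rw [hTk, hTk, cnj_sub]
      refine cnj_psd hU fun i => ?_
      have h0 := (ht01 i).1; have h1 := (ht01 i).2
      have : t i ^ ((k+1)+(k+1)) ≤ t i ^ (k + k) :=
        pow_le_pow_of_le_one h0 h1 (by omega)
      simpa [Pi.sub_apply, Pi.pow_apply] using sub_nonneg.mpr this
    have hineq := hD.dotProduct_mulVec_nonneg m
    have hmain : (((1 : Matrix (Fin n) (Fin n) ℝ) - S) ^ (k+1) *ᵥ m) ⬝ᵥ
        (((1 : Matrix (Fin n) (Fin n) ℝ) - S) ^ (k+1) *ᵥ m)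
        ≤ (((1 : Matrix (Fin n) (Fin n) ℝ) - S) ^ k *ᵥ m) ⬝ᵥ
        (((1 : Matrix (Fin n) (Fin n) ℝ) - S) ^ k *ᵥ m) := by
      rw [key, key, ← sub_nonneg, ← dotProduct_sub, ← sub_mulVec]
      simpa using hineq
    have hnorm : ∀ v : Fin n → ℝ,
        ‖(WithLp.equiv 2 (Fin n → ℝ)).symm v‖ = Real.sqrt (v ⬝ᵥ v) := by
      intro v
      rw [EuclideanSpace.norm_eq]
      congr 1
      simp [dotProduct, Real.norm_eq_abs, sq_abs, sq]
    rw [hnorm, hnorm]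
    exact Real.sqrt_le_sqrt hmain
  · -- part (b)
    rw [hBj, hBj, cnj_sub]
    refine cnj_psd hU fun i => ?_
    have h0 := (ht01 i).1; have h1 := (ht01 i).2
    have hk1 : t i ^ (k+1) ≤ t i ^ k := pow_le_pow_of_le_one h0 h1 (Nat.le_succ k)
    have hle1 : t i ^ k ≤ 1 := pow_le_one₀ h0 h1
    have hge0 : 0 ≤ t i ^ (k+1) := pow_nonneg h0 _
    simp only [Pi.sub_apply, Pi.pow_apply, Pi.one_apply]
    nlinarith [sq_nonneg (t i ^ k - t i ^ (k+1))]
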